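/- Let H be a complex separable Hilbert space, K a bounded linear operator on H, (f_k)_{k∈I} a Bessel sequence in H, and (g_k)_{k∈I} a Bessel sequence in H with Bessel bound D > 0, such that for every x ∈ H the family (⟨g_k, x⟩ f_k)_{k∈I} is unconditionally summable with sum Kx. Then for every x ∈ H one has D⁻¹‖K*x‖² ≤ Σ_{k∈I} |⟨f_k, x⟩|²; in particular (f_k) is a K-frame with lower bound D⁻¹. -/

import Mathlib

open ContinuousLinearMap

lemma tsum_cs {I : Type*} (a b : I → ℝ) (ha0 : ∀ k, 0 ≤ a k) (hb0 : ∀ k, 0 ≤ b k)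
    (ha : Summable (fun k => a k ^ 2)) (hb : Summable (fun k => b k ^ 2)) :
    ∑' k, a k * b k ≤ Real.sqrt (∑' k, a k ^ 2) * Real.sqrt (∑' k, b k ^ 2) := by
  have hab : Summable (fun k => a k * b k) := by
    apply Summable.of_nonneg_of_le (fun k => mul_nonneg (ha0 k) (hb0 k))
      (fun k => ?_) ((ha.add hb).div_const 2)
    nlinarith [sq_nonneg (a k - b k)]
  refine Summable.tsum_le_of_sum_le hab fun s => ?_
  refine (Real.sum_mul_le_sqrt_mul_sqrt s a b).trans ?_
  gcongr <;>
    exact Summable.sum_le_tsum s (fun k _ => sq_nonneg _) ‹_›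

/-- If `(f k)` is a Bessel sequence, `(g k)` a Bessel sequence with bound
`D > 0`, and `∑ₖ ⟨g k, x⟩ • f k = K x` unconditionally for all `x`, then
`D⁻¹ ‖K* x‖² ≤ ∑ₖ |⟨f k, x⟩|²`, i.e. `(f k)` is a `K`-frame with lower bound `D⁻¹`. -/
theorem kframe_lower_bound
    {H : Type*} [NormedAddCommGroup H] [InnerProductSpace ℂ H]
    [CompleteSpace H] [TopologicalSpace.SeparableSpace H]
    {I : Type*} [Countable I]
    (K : H →L[ℂ] H) (f g : I → H) (D : ℝ) (hD : 0 < D)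
    (hf : ∃ B : ℝ, 0 < B ∧ ∀ x : H, Summable (fun k => ‖(inner ℂ (f k) x : ℂ)‖ ^ 2) ∧
      ∑' k, ‖(inner ℂ (f k) x : ℂ)‖ ^ 2 ≤ B * ‖x‖ ^ 2)
    (hg : ∀ x : H, Summable (fun k => ‖(inner ℂ (g k) x : ℂ)‖ ^ 2) ∧
      ∑' k, ‖(inner ℂ (g k) x : ℂ)‖ ^ 2 ≤ D * ‖x‖ ^ 2)
    (hdual : ∀ x : H, HasSum (fun k => (inner ℂ (g k) x : ℂ) • f k) (K x)) :
    ∀ x : H, D⁻¹ * ‖adjoint K x‖ ^ 2 ≤ ∑' k, ‖(inner ℂ (f k) x : ℂ)‖ ^ 2 := by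
  intro x
  obtain ⟨B, hB, hfB⟩ := hf
  set y := adjoint K x with hy
  have hfs := (hfB x).1
  have hgs := (hg y).1
  have hgle := (hg y).2
  -- identity : ⟪x, K y⟫ = ∑' ⟪g k, y⟫ * ⟪x, f k⟫
  have h1 : HasSum (fun k => (innerSL ℂ x) ((inner ℂ (g k) y : ℂ) • f k)) ((innerSL ℂ x) (K y)) :=
    (hdual y).mapL (innerSL ℂ x)
  have h2 : (inner ℂ x (K y) : ℂ) = ∑' k, (inner ℂ (g k) y : ℂ) * (inner ℂ x (f k) : ℂ) := by
    have := h1.tsum_eq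
    simpa [innerSL_apply_apply, inner_smul_right] using this.symm
  have h3 : (inner ℂ x (K y) : ℂ) = (‖y‖ : ℂ) ^ 2 := by
    rw [← adjoint_inner_left, ← hy]
    exact inner_self_eq_norm_sq_to_K y
  have heq : ∀ k, ‖(inner ℂ x (f k) : ℂ)‖ = ‖(inner ℂ (f k) x : ℂ)‖ := fun k =>
    norm_inner_symm x (f k)
  have hfs' : Summable (fun k => ‖(inner ℂ x (f k) : ℂ)‖ ^ 2) := by
    simp only [heq]; exact hfs
  -- bound
  have hnorm : ‖y‖ ^ 2 ≤ ∑' k, ‖(inner ℂ (g k) y : ℂ)‖ * ‖(inner ℂ (f k) x : ℂ)‖ := by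
    have hsum : Summable (fun k => ‖(inner ℂ (g k) y : ℂ) * (inner ℂ x (f k) : ℂ)‖) := by
      simp only [norm_mul]
      apply Summable.of_nonneg_of_le (fun k => mul_nonneg (norm_nonneg _) (norm_nonneg _))
        (fun k => ?_) ((hgs.add hfs').div_const 2)
      nlinarith [sq_nonneg (‖(inner ℂ (g k) y : ℂ)‖ - ‖(inner ℂ x (f k) : ℂ)‖),
        norm_nonneg ((inner ℂ (g k) y : ℂ)), norm_nonneg ((inner ℂ x (f k) : ℂ))]
    calc ‖y‖ ^ 2 = ‖(inner ℂ x (K y) : ℂ)‖ := by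
          rw [h3]; simp [norm_pow]
      _ ≤ ∑' k, ‖(inner ℂ (g k) y : ℂ) * (inner ℂ x (f k) : ℂ)‖ := by
          rw [h2]; exact norm_tsum_le_tsum_norm hsum
      _ = ∑' k, ‖(inner ℂ (g k) y : ℂ)‖ * ‖(inner ℂ (f k) x : ℂ)‖ := by
          simp only [norm_mul, heq]
  -- Cauchy–Schwarz
  set S := ∑' k, ‖(inner ℂ (f k) x : ℂ)‖ ^ 2 with hS
  have hS0 : 0 ≤ S := tsum_nonneg fun k => sq_nonneg _
  have hcs : ∑' k, ‖(inner ℂ (g k) y : ℂ)‖ * ‖(inner ℂ (f k) x : ℂ)‖ ≤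
      Real.sqrt (∑' k, ‖(inner ℂ (g k) y : ℂ)‖ ^ 2) * Real.sqrt S := by
    have h := tsum_cs (fun k => ‖(inner ℂ (g k) y : ℂ)‖) (fun k => ‖(inner ℂ x (f k) : ℂ)‖)
      (fun k => norm_nonneg _) (fun k => norm_nonneg _) hgs hfs'
    simp only [heq] at h
    exact h
  have hkey : ‖y‖ ^ 2 ≤ Real.sqrt (D * ‖y‖ ^ 2) * Real.sqrt S :=
    (hnorm.trans hcs).trans (mul_le_mul_of_nonneg_right (Real.sqrt_le_sqrt hgle)
      (Real.sqrt_nonneg _))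
  have hsq : (‖y‖ ^ 2) ^ 2 ≤ D * ‖y‖ ^ 2 * S := by
    calc (‖y‖ ^ 2) ^ 2 ≤ (Real.sqrt (D * ‖y‖ ^ 2) * Real.sqrt S) ^ 2 := by
          apply pow_le_pow_left₀ (sq_nonneg _) hkey
      _ = D * ‖y‖ ^ 2 * S := by
          rw [mul_pow, Real.sq_sqrt (by positivity), Real.sq_sqrt hS0]
  rcases eq_or_lt_of_le (sq_nonneg ‖y‖) with h0 | h0
  · rw [← h0, mul_zero]; exact hS0
  · rw [inv_mul_le_iff₀ hD]
    nlinarith
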